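/- The sequence ℓ_n is O(3^n): there is a constant K > 0 such that ℓ_n ≤ K·3^n for all n. -/

import Mathlib

set_option maxHeartbeats 1000000
open Real

/-- `lcmUpTo n` is `lcm(1, 2, ..., n)` (and `1` for `n = 0`). -/
def lcmUpTo (n : ℕ) : ℕ := (Finset.Icc 1 n).lcm id


lemma choose_mul_pow_le (x y : ℕ) : (x+y).choose x * (x^x * y^y) ≤ (x+y)^(x+y) := by
  have h := add_pow x y (x + y)  -- (x+y)^(x+y) = ∑ k in range (x+y+1), x^k*y^(x+y-k)*choose
  rw [h]
  have hx : x ∈ Finset.range (x + y + 1) := by simp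
  calc (x+y).choose x * (x^x * y^y) = x ^ x * y ^ (x + y - x) * (x+y).choose x := by
        rw [Nat.add_sub_cancel_left]; ring
    _ ≤ _ := Finset.single_le_sum (f := fun k => x ^ k * y ^ (x + y - k) * (x+y).choose k)
        (fun i _ => Nat.zero_le _) hx

lemma multinomial_mul_prod_pow_le {α : Type*} [DecidableEq α] (s : Finset α) (f : α → ℕ) :
    Nat.multinomial s f * ∏ i ∈ s, (f i)^(f i) ≤ (∑ i ∈ s, f i) ^ (∑ i ∈ s, f i) := by
  induction s using Finset.induction with
  | empty => simp [Nat.multinomial]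
  | @insert a s ha ih =>
    rw [Nat.multinomial_insert ha, Finset.prod_insert ha, Finset.sum_insert ha]
    calc (f a + ∑ i ∈ s, f i).choose (f a) * Nat.multinomial s f *
          ((f a)^(f a) * ∏ i ∈ s, (f i)^(f i))
        = (f a + ∑ i ∈ s, f i).choose (f a) * (f a)^(f a) *
            (Nat.multinomial s f * ∏ i ∈ s, (f i)^(f i)) := by ring
      _ ≤ (f a + ∑ i ∈ s, f i).choose (f a) * (f a)^(f a) * (∑ i ∈ s, f i)^(∑ i ∈ s, f i) :=
          Nat.mul_le_mul_left _ ih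
      _ ≤ (f a + ∑ i ∈ s, f i)^(f a + ∑ i ∈ s, f i) := by
          have := choose_mul_pow_le (f a) (∑ i ∈ s, f i)
          calc _ = (f a + ∑ i ∈ s, f i).choose (f a) *
              ((f a)^(f a) * (∑ i ∈ s, f i)^(∑ i ∈ s, f i)) := by ring
            _ ≤ _ := this

lemma log_piece (a b n : ℝ) (ha : 2 ≤ a) (hn : 2*a^2 ≤ n)
    (hab : a*b ≤ n) (hab2 : n < a*b + a) :
    b * (Real.log n - Real.log b) ≤ n/a * Real.log a + 2 := by
  have ha0 : 0 < a := by linarith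
  have hn0 : 0 < n := by nlinarith
  have hna : a < n := by nlinarith
  have hb0 : 0 < b := by nlinarith
  have hba : b ≤ n / a := by rw [le_div_iff₀ ha0]; linarith [hab]
  -- log n - log b ≤ log a + 2a/n
  have hna' : (0:ℝ) < n - a := by linarith
  have hblow : (n - a)/a ≤ b := by rw [div_le_iff₀ ha0]; nlinarith
  have h1 : Real.log ((n-a)/a) ≤ Real.log b := Real.log_le_log (by positivity) hblow
  have h2 : Real.log ((n-a)/a) = Real.log (n-a) - Real.log a :=
    Real.log_div hna'.ne' ha0.ne'
  have h3 : Real.log n - Real.log (n-a) ≤ 2*a/n := by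
    have hd : Real.log n - Real.log (n-a) = Real.log (n/(n-a)) := by
      rw [Real.log_div hn0.ne' hna'.ne']
    rw [hd]
    have := Real.log_le_sub_one_of_pos (show (0:ℝ) < n/(n-a) from div_pos hn0 hna')
    have h4 : n/(n-a) - 1 = a/(n-a) := by
      rw [div_sub_one hna'.ne']; ring_nf
    have h5 : a/(n-a) ≤ 2*a/n := by
      rw [div_le_div_iff₀ (by nlinarith) hn0]
      nlinarith
    linarith
  have hΔ : Real.log n - Real.log b ≤ Real.log a + 2*a/n := by linarith
  have hpos : (0:ℝ) ≤ Real.log a + 2*a/n := by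
    have : 0 ≤ Real.log a := Real.log_nonneg (by linarith)
    positivity
  calc b * (Real.log n - Real.log b) ≤ b * (Real.log a + 2*a/n) :=
        mul_le_mul_of_nonneg_left hΔ hb0.le
    _ ≤ n/a * (Real.log a + 2*a/n) := mul_le_mul_of_nonneg_right hba hpos
    _ = n/a * Real.log a + 2 := by field_simp

lemma log_le_of_pow_le {a : ℝ} (N M : ℕ) (ha : 0 < a) (hN : 0 < N)
    (h : a ^ N ≤ 2 ^ M) : (N:ℝ) * Real.log a ≤ (M:ℝ) * Real.log 2 := by
  have := Real.log_le_log (by positivity) h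
  rwa [Real.log_pow, Real.log_pow] at this

lemma log3_up : Real.log 3 ≤ 1.09864 := by
  have h := log_le_of_pow_le (a:=3) 1000 1585 (by norm_num) (by norm_num) (by rw [show (3:ℝ)^1000 = ((3:ℝ)^250)^4 by rw [← pow_mul], show (2:ℝ)^1585 = ((2:ℝ)^250)^6 * 2^85 by rw [← pow_mul, ← pow_add]]; norm_num)
  have h2 : Real.log 2 < 0.6931471808 := Real.log_two_lt_d9
  push_cast at h
  nlinarith [Real.log_nonneg (show (1:ℝ) ≤ 2 by norm_num)]

lemma log3_low : (1.097945:ℝ) ≤ Real.log 3 := by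
  have h := Real.log_le_log (show (0:ℝ) < 2^1584 by positivity)
    (show (2:ℝ)^1584 ≤ 3^1000 by rw [show (3:ℝ)^1000 = ((3:ℝ)^250)^4 by rw [← pow_mul], show (2:ℝ)^1584 = ((2:ℝ)^250)^6 * 2^84 by rw [← pow_mul, ← pow_add]]; norm_num)
  rw [Real.log_pow, Real.log_pow] at h
  have h2 : 0.6931471803 < Real.log 2 := Real.log_two_gt_d9
  push_cast at h
  nlinarith

lemma log7_up : Real.log 7 ≤ 1.9463573 := by
  have h := log_le_of_pow_le (a:=7) 1000 2808 (by norm_num) (by norm_num) (by rw [show (7:ℝ)^1000 = ((7:ℝ)^250)^4 by rw [← pow_mul], show (2:ℝ)^2808 = ((2:ℝ)^250)^11 * 2^58 by rw [← pow_mul, ← pow_add]]; norm_num)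
  have h2 : Real.log 2 < 0.6931471808 := Real.log_two_lt_d9
  push_cast at h
  nlinarith [Real.log_nonneg (show (1:ℝ) ≤ 2 by norm_num)]

lemma log43_up : Real.log 43 ≤ 3.7617098 := by
  have h := log_le_of_pow_le (a:=43) 1000 5427 (by norm_num) (by norm_num) (by rw [show (43:ℝ)^1000 = ((43:ℝ)^250)^4 by rw [← pow_mul], show (2:ℝ)^5427 = ((2:ℝ)^250)^21 * 2^177 by rw [← pow_mul, ← pow_add]]; norm_num)
  have h2 : Real.log 2 < 0.6931471808 := Real.log_two_lt_d9
  push_cast at h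
  nlinarith [Real.log_nonneg (show (1:ℝ) ≤ 2 by norm_num)]

lemma log1807_up : Real.log 1807 ≤ 7.4998525 := by
  have h := log_le_of_pow_le (a:=1807) 1000 10820 (by norm_num) (by norm_num) (by rw [show (1807:ℝ)^1000 = ((1807:ℝ)^250)^4 by rw [← pow_mul], show (2:ℝ)^10820 = ((2:ℝ)^250)^43 * 2^70 by rw [← pow_mul, ← pow_add]]; norm_num)
  have h2 : Real.log 2 < 0.6931471808 := Real.log_two_lt_d9
  push_cast at h
  nlinarith [Real.log_nonneg (show (1:ℝ) ≤ 2 by norm_num)]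

lemma logM_up : Real.log 3263442 ≤ 16 := by
  have h := log_le_of_pow_le (a:=3263442) 1 22 (by norm_num) (by norm_num) (by norm_num)
  have h2 : Real.log 2 < 0.6931471808 := Real.log_two_lt_d9
  push_cast at h
  nlinarith [Real.log_nonneg (show (1:ℝ) ≤ 2 by norm_num)]

lemma log4_up : Real.log 4 ≤ 1.3862943616 := by
  have h : (4:ℝ) = 2^2 := by norm_num
  rw [h, Real.log_pow]
  have h2 : Real.log 2 < 0.6931471808 := Real.log_two_lt_d9
  push_cast
  nlinarith

lemma numeric_main (n b1 b2 b3 b4 b5 s r : ℝ)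
    (hn : 10^13 ≤ n)
    (hb1 : 2*b1 ≤ n) (hb1' : n < 2*b1 + 2)
    (hb2 : 3*b2 ≤ n) (hb2' : n < 3*b2 + 3)
    (hb3 : 7*b3 ≤ n) (hb3' : n < 7*b3 + 7)
    (hb4 : 43*b4 ≤ n) (hb4' : n < 43*b4 + 43)
    (hb5 : 1807*b5 ≤ n) (hb5' : n < 1807*b5 + 1807)
    (hs : n ≤ 3263442*s) (hs' : 3263442*s ≤ n + 5*3263442)
    (hr : 0 ≤ r) (hr2 : r^2 ≤ n)
    (hsum : b1+b2+b3+b4+b5+s = n) :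
    (r + 1 + n) * Real.log n + (r + s) * Real.log 4 ≤
      n * Real.log 3 + (b1*Real.log b1 + b2*Real.log b2 + b3*Real.log b3
        + b4*Real.log b4 + b5*Real.log b5 + s*Real.log s) := by
  have hn0 : (0:ℝ) < n := by linarith
  -- u := n^(1/4)
  set u : ℝ := n ^ ((4:ℝ)⁻¹) with hu
  have hu0 : 0 < u := Real.rpow_pos_of_pos hn0 _
  have hu4 : u ^ (4:ℕ) = n := by
    rw [hu, ← Real.rpow_natCast (n ^ ((4:ℝ)⁻¹)) 4, ← Real.rpow_mul hn0.le]
    norm_num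
  have hu1778 : 1778 ≤ u := by
    by_contra h
    push_neg at h
    have h2 : u ^ (4:ℕ) < 1778 ^ (4:ℕ) := by
      apply pow_lt_pow_left₀ h hu0.le
      norm_num
    rw [hu4] at h2
    norm_num at h2
    linarith
  have hlogn : Real.log n ≤ 4*u := by
    have h1 : Real.log u = (4:ℝ)⁻¹ * Real.log n := Real.log_rpow hn0 _
    have h2 : Real.log u ≤ u - 1 := Real.log_le_sub_one_of_pos hu0
    linarith
  have hlogn0 : 0 ≤ Real.log n := Real.log_nonneg (by linarith)
  have hru : r ≤ u^2 := by nlinarith [hu4, sq_nonneg (r - u^2), sq_nonneg (r + u^2), hu0.le]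
  -- pieces
  have p1 := log_piece 2 b1 n (by norm_num) (by linarith) hb1 hb1'
  have p2 := log_piece 3 b2 n (by norm_num) (by linarith) hb2 hb2'
  have p3 := log_piece 7 b3 n (by norm_num) (by linarith) hb3 hb3'
  have p4 := log_piece 43 b4 n (by norm_num) (by linarith) hb4 hb4'
  have p5 := log_piece 1807 b5 n (by norm_num) (by linarith) hb5 hb5'
  -- s piece
  have hs0 : 0 < s := by linarith
  have hsn : s ≤ n := by linarith
  have hps : s * (Real.log n - Real.log s) ≤ (n/3263442 + 5) * 16 := by
    have h1 : Real.log n - Real.log s = Real.log (n/s) := (Real.log_div hn0.ne' hs0.ne').symm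
    have h2 : n/s ≤ 3263442 := by rw [div_le_iff₀ hs0]; linarith
    have h3 : Real.log (n/s) ≤ Real.log 3263442 := Real.log_le_log (by positivity) h2
    have h4 : Real.log (n/s) ≤ 16 := le_trans h3 logM_up
    have h5 : s ≤ n/3263442 + 5 := by linarith
    calc s * (Real.log n - Real.log s) ≤ s * 16 := by
          rw [h1]; exact mul_le_mul_of_nonneg_left h4 hs0.le
      _ ≤ (n/3263442 + 5) * 16 := by linarith
  -- (r+1) log n ≤ (u^2+1) * 4u
  have hA : (r+1) * Real.log n ≤ (u^2+1) * (4*u) := by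
    calc (r+1) * Real.log n ≤ (u^2+1) * Real.log n := by
          apply mul_le_mul_of_nonneg_right _ hlogn0; linarith
      _ ≤ (u^2+1) * (4*u) := by
          apply mul_le_mul_of_nonneg_left hlogn; positivity
  -- (r+s) log 4 ≤ (u^2 + n/M + 5) * 1.3862943616
  have hB : (r+s) * Real.log 4 ≤ (u^2 + (n/3263442 + 5)) * 1.3862943616 := by
    have hlog40 : 0 ≤ Real.log 4 := Real.log_nonneg (by norm_num)
    have h5 : s ≤ n/3263442 + 5 := by linarith
    calc (r+s) * Real.log 4 ≤ (u^2 + (n/3263442+5)) * Real.log 4 := by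
          apply mul_le_mul_of_nonneg_right _ hlog40; linarith
      _ ≤ _ := by
          apply mul_le_mul_of_nonneg_left log4_up
          have : (0:ℝ) ≤ n/3263442 := by positivity
          nlinarith
  -- scale pieces by numeric log bounds
  have q1 : n/2 * Real.log 2 ≤ n/2 * 0.6931471808 :=
    mul_le_mul_of_nonneg_left Real.log_two_lt_d9.le (by positivity)
  have q2 : n/3 * Real.log 3 ≤ n/3 * 1.09864 :=
    mul_le_mul_of_nonneg_left log3_up (by positivity)
  have q3 : n/7 * Real.log 7 ≤ n/7 * 1.9463573 :=
    mul_le_mul_of_nonneg_left log7_up (by positivity)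
  have q4 : n/43 * Real.log 43 ≤ n/43 * 3.7617098 :=
    mul_le_mul_of_nonneg_left log43_up (by positivity)
  have q5 : n/1807 * Real.log 1807 ≤ n/1807 * 7.4998525 :=
    mul_le_mul_of_nonneg_left log1807_up (by positivity)
  have hlog3 := log3_low
  -- final: rewrite n log n using hsum and combine
  have key : (r + 1 + n) * Real.log n + (r + s) * Real.log 4
      - (b1*Real.log b1 + b2*Real.log b2 + b3*Real.log b3 + b4*Real.log b4
         + b5*Real.log b5 + s*Real.log s)
      = (r+1) * Real.log n + (r+s) * Real.log 4
        + b1*(Real.log n - Real.log b1) + b2*(Real.log n - Real.log b2)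
        + b3*(Real.log n - Real.log b3) + b4*(Real.log n - Real.log b4)
        + b5*(Real.log n - Real.log b5) + s*(Real.log n - Real.log s) := by
    linear_combination (-(Real.log n)) * hsum
  have main : (r+1) * Real.log n + (r+s) * Real.log 4
        + b1*(Real.log n - Real.log b1) + b2*(Real.log n - Real.log b2)
        + b3*(Real.log n - Real.log b3) + b4*(Real.log n - Real.log b4)
        + b5*(Real.log n - Real.log b5) + s*(Real.log n - Real.log s)
      ≤ n * Real.log 3 := by
    have hnu : n = u^4 := hu4.symm
    have hu2 : u^2 ≥ 1778*u := by nlinarith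
    have hu3 : u^3 ≥ 1778*u^2 := by nlinarith
    have hu4' : u^4 ≥ 1778*u^3 := by nlinarith
    have hnlog3 : n * 1.097945 ≤ n * Real.log 3 := mul_le_mul_of_nonneg_left hlog3 hn0.le
    linarith [hA, hB, p1, p2, p3, p4, p5, hps, q1, q2, q3, q4, q5, hnlog3, hu2, hu3, hu4',
      hu1778, hu0.le]
  linarith [key, main]

lemma prime_dvd_multinomial (n p : ℕ) (hp : p.Prime) (hpn : p ≤ n) (hp2 : n < p^2)
    (hps : n - (n/2 + n/3 + n/7 + n/43 + n/1807) < p) :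
    p ∣ Nat.multinomial Finset.univ
      ![n/2, n/3, n/7, n/43, n/1807, n - (n/2 + n/3 + n/7 + n/43 + n/1807)] := by
  have hn0 : n ≠ 0 := by omega
  set s := n - (n/2 + n/3 + n/7 + n/43 + n/1807) with hs
  set f : Fin 6 → ℕ := ![n/2, n/3, n/7, n/43, n/1807, s] with hf
  set E := Nat.multinomial Finset.univ f with hE
  have h0 : f 0 = n/2 := rfl
  have h1 : f 1 = n/3 := rfl
  have h2' : f 2 = n/7 := rfl
  have h3' : f 3 = n/43 := rfl
  have h4' : f 4 = n/1807 := rfl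
  have h5' : f 5 = s := rfl
  have hsum : ∑ i, f i = n := by
    rw [Fin.sum_univ_six, h0, h1, h2', h3', h4', h5']
    omega
  have hspec : (∏ i, (f i).factorial) * E = n.factorial := by
    rw [hE, Nat.multinomial_spec, hsum]
  have hT0 : (∏ i, (f i).factorial) ≠ 0 := by positivity
  have hE0 : E ≠ 0 := (Nat.multinomial_pos _ _).ne'
  have hlogn : Nat.log p n < 2 := Nat.log_lt_of_lt_pow hn0 hp2
  -- lower bound on factorization of n!
  have hlow : n / p ≤ (n.factorial).factorization p := by
    rw [← Nat.Prime.pow_dvd_iff_le_factorization hp n.factorial_ne_zero]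
    rw [Nat.Prime.pow_dvd_factorial_iff hp hlogn]
    simp
  -- each factor
  have key : ∀ k, k ≤ n → (k.factorial).factorization p ≤ k / p := by
    intro k hk
    have hlogk : Nat.log p k < 2 := lt_of_le_of_lt (Nat.log_mono_right hk) hlogn
    have := (Nat.Prime.pow_dvd_factorial_iff hp hlogk).mp (Nat.ordProj_dvd k.factorial p)
    simpa using this
  have hfk : ∀ i, f i ≤ n := by
    intro i
    calc f i ≤ ∑ j, f j := Finset.single_le_sum (fun _ _ => Nat.zero_le _) (Finset.mem_univ i)
      _ = n := hsum
  have hTfac : (∏ i, (f i).factorial).factorization p ≤ ∑ i : Fin 6, f i / p := by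
    rw [Nat.factorization_prod (fun i _ => (f i).factorial_ne_zero)]
    simp only [Finset.sum_apply']
    exact Finset.sum_le_sum fun i _ => key (f i) (hfk i)
  have hmul : (n.factorial).factorization p
      = (∏ i, (f i).factorial).factorization p + E.factorization p := by
    rw [← hspec, Nat.factorization_mul hT0 hE0]; simp
  -- compute sum of f i / p
  have hsum2 : ∑ i : Fin 6, f i / p = (n/p)/2 + (n/p)/3 + (n/p)/7 + (n/p)/43 + (n/p)/1807 := by
    rw [Fin.sum_univ_six, h0, h1, h2', h3', h4', h5']
    have h2 : n/2/p = n/p/2 := by rw [Nat.div_div_eq_div_mul, Nat.div_div_eq_div_mul, mul_comm]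
    have h3 : n/3/p = n/p/3 := by rw [Nat.div_div_eq_div_mul, Nat.div_div_eq_div_mul, mul_comm]
    have h7 : n/7/p = n/p/7 := by rw [Nat.div_div_eq_div_mul, Nat.div_div_eq_div_mul, mul_comm]
    have h43 : n/43/p = n/p/43 := by rw [Nat.div_div_eq_div_mul, Nat.div_div_eq_div_mul, mul_comm]
    have h1807 : n/1807/p = n/p/1807 := by
      rw [Nat.div_div_eq_div_mul, Nat.div_div_eq_div_mul, mul_comm]
    have hsp : s / p = 0 := Nat.div_eq_of_lt hps
    omega
  have hm1 : 1 ≤ n / p := (Nat.one_le_div_iff hp.pos).mpr hpn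
  have h1E : 1 ≤ E.factorization p := by
    have := hlow
    rw [hmul] at this
    have h := hTfac
    rw [hsum2] at h
    omega
  have := (Nat.Prime.pow_dvd_iff_le_factorization hp hE0).mpr h1E
  simpa using this

lemma lcmUpTo_dvd (n : ℕ) (hn : n ≠ 0) :
    lcmUpTo n ∣ ∏ p ∈ Nat.primesBelow (n+1), p ^ (Nat.log p n) := by
  apply Finset.lcm_dvd
  intro k hk
  simp only [Finset.mem_Icc] at hk
  have hk0 : k ≠ 0 := by omega
  have hsupp : k.factorization.support ⊆ Nat.primesBelow (n+1) := by
    intro p hp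
    rw [Nat.support_factorization, Nat.mem_primeFactors] at hp
    rw [Nat.mem_primesBelow]
    exact ⟨by
      have := Nat.le_of_dvd (by omega) hp.2.1
      omega, hp.1⟩
  have hk' : k = ∏ p ∈ Nat.primesBelow (n+1), p ^ (k.factorization p) := by
    rw [← Finsupp.prod_of_support_subset _ hsupp (fun p e => p ^ e) (by simp)]
    exact (Nat.factorization_prod_pow_eq_self hk0).symm
  rw [id, hk']
  apply Finset.prod_dvd_prod_of_dvd
  intro p hp
  rw [Nat.mem_primesBelow] at hp
  apply pow_dvd_pow
  have hple : p ^ (k.factorization p) ≤ n :=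
    le_trans (Nat.le_of_dvd (by omega) (Nat.ordProj_dvd k p)) hk.2
  exact (Nat.le_log_iff_pow_le hp.2.one_lt hn).mpr hple

lemma nat_main (n : ℕ) (hn : 1807 ≤ n) :
    lcmUpTo n ≤ n^(Nat.sqrt n + 1) *
      4^(Nat.sqrt n + (n - (n/2 + n/3 + n/7 + n/43 + n/1807))) *
      Nat.multinomial Finset.univ
        ![n/2, n/3, n/7, n/43, n/1807, n - (n/2 + n/3 + n/7 + n/43 + n/1807)] := by
  have hn0 : n ≠ 0 := by omega
  set s := n - (n/2 + n/3 + n/7 + n/43 + n/1807) with hs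
  set E := Nat.multinomial Finset.univ ![n/2, n/3, n/7, n/43, n/1807, s] with hE
  have hE0 : E ≠ 0 := (Nat.multinomial_pos _ _).ne'
  set r := Nat.sqrt n with hr
  set B := max r s with hB
  set Q := Nat.primesBelow (n+1) with hQ
  set L := ∏ p ∈ Q, p ^ (Nat.log p n) with hL
  have hLpos : 0 < L := Finset.prod_pos
    (fun p hp => pow_pos (Nat.mem_primesBelow.mp hp).2.pos _)
  have h1 : lcmUpTo n ≤ L := Nat.le_of_dvd hLpos (lcmUpTo_dvd n hn0)
  -- split
  have hsplit : L = (∏ p ∈ Q with p ≤ r, p ^ (Nat.log p n)) *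
      (∏ p ∈ Q with ¬ p ≤ r, p ^ (Nat.log p n)) :=
    (Finset.prod_filter_mul_prod_filter_not Q _ _).symm
  -- piece 1
  have hP1 : (∏ p ∈ Q with p ≤ r, p ^ (Nat.log p n)) ≤ n ^ (r + 1) := by
    calc (∏ p ∈ Q with p ≤ r, p ^ (Nat.log p n)) ≤ ∏ p ∈ Q with p ≤ r, n :=
          Finset.prod_le_prod' (fun p _ => Nat.pow_log_le_self p hn0)
      _ = n ^ (Q.filter (fun p => p ≤ r)).card := (Finset.prod_const n)
      _ ≤ n ^ (r + 1) := Nat.pow_le_pow_right (by omega) (by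
          have : (Q.filter (fun p => p ≤ r)) ⊆ Finset.range (r+1) := by
            intro p hp
            simp only [Finset.mem_filter] at hp
            simp only [Finset.mem_range]
            omega
          have := Finset.card_le_card this
          simpa using this)
  -- on the complement, exponent is 1
  have hexp1 : ∀ p ∈ Q.filter (fun p => ¬ p ≤ r), Nat.log p n = 1 := by
    intro p hp
    simp only [Finset.mem_filter, hQ, Nat.mem_primesBelow] at hp
    have hlt2 : Nat.log p n < 2 := by
      apply Nat.log_lt_of_lt_pow hn0
      have h1 : r + 1 ≤ p := by omega
      calc n < (r+1) * (r+1) := Nat.lt_succ_sqrt n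
        _ ≤ p * p := Nat.mul_le_mul h1 h1
        _ = p ^ 2 := (sq p).symm
    have hge1 : 0 < Nat.log p n := Nat.log_pos hp.1.2.one_lt (by omega)
    omega
  have hcongr : (∏ p ∈ Q with ¬ p ≤ r, p ^ (Nat.log p n)) = ∏ p ∈ Q with ¬ p ≤ r, p := by
    apply Finset.prod_congr rfl
    intro p hp
    rw [hexp1 p hp, pow_one]
  -- split complement by B
  set Q2 := Q.filter (fun p => ¬ p ≤ r) with hQ2
  have hsplit2 : (∏ p ∈ Q2, p) = (∏ p ∈ Q2 with p ≤ B, p) * (∏ p ∈ Q2 with ¬ p ≤ B, p) :=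
    (Finset.prod_filter_mul_prod_filter_not Q2 _ _).symm
  have hX2 : (∏ p ∈ Q2 with p ≤ B, p) ≤ 4 ^ (r + s) := by
    have hdvd : (∏ p ∈ Q2 with p ≤ B, p) ∣ primorial B := by
      rw [primorial]
      apply Finset.prod_dvd_prod_of_subset
      intro p hp
      simp only [Finset.mem_filter, hQ2, hQ, Nat.mem_primesBelow] at hp
      simp only [Finset.mem_filter, Finset.mem_range]
      exact ⟨by omega, hp.1.1.2⟩
    have hppos : 0 < primorial B := by
      rw [primorial]
      exact Finset.prod_pos (fun p hp => (Finset.mem_filter.mp hp).2.pos)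
    calc (∏ p ∈ Q2 with p ≤ B, p) ≤ primorial B := Nat.le_of_dvd hppos hdvd
      _ ≤ 4 ^ B := primorial_le_4_pow B
      _ ≤ 4 ^ (r + s) := Nat.pow_le_pow_right (by omega) (by omega)
  have hX3 : (∏ p ∈ Q2 with p ≤ B, p) * (∏ p ∈ Q2 with ¬ p ≤ B, p) ≤ 4 ^ (r+s) * E := by
    apply Nat.mul_le_mul hX2
    apply Nat.le_of_dvd (Nat.pos_of_ne_zero hE0)
    apply Finset.prod_primes_dvd
    · intro p hp
      simp only [Finset.mem_filter, hQ2, hQ, Nat.mem_primesBelow] at hp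
      exact hp.1.1.2.prime
    · intro p hp
      simp only [Finset.mem_filter, hQ2, hQ, Nat.mem_primesBelow] at hp
      obtain ⟨⟨⟨hpn1, hprime⟩, hpr⟩, hpB⟩ := hp
      apply prime_dvd_multinomial n p hprime (by omega)
      · have h1 : r + 1 ≤ p := by omega
        calc n < (r+1) * (r+1) := Nat.lt_succ_sqrt n
          _ ≤ p * p := Nat.mul_le_mul h1 h1
          _ = p ^ 2 := (sq p).symm
      · rw [← hs]; omega
  calc lcmUpTo n ≤ L := h1
    _ = (∏ p ∈ Q with p ≤ r, p ^ (Nat.log p n)) * (∏ p ∈ Q2, p) := by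
        rw [hsplit, hcongr]
    _ = (∏ p ∈ Q with p ≤ r, p ^ (Nat.log p n)) *
        ((∏ p ∈ Q2 with p ≤ B, p) * (∏ p ∈ Q2 with ¬ p ≤ B, p)) := by rw [← hsplit2]
    _ ≤ n ^ (r+1) * (4^(r+s) * E) := Nat.mul_le_mul hP1 hX3
    _ = n^(r+1) * 4^(r+s) * E := by ring

lemma eventual (n : ℕ) (hn : 10^13 ≤ n) : (lcmUpTo n : ℝ) ≤ 3^n := by
  have hn1807 : 1807 ≤ n := by omega
  have hn0 : n ≠ 0 := by omega
  set s := n - (n/2 + n/3 + n/7 + n/43 + n/1807) with hs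
  set f : Fin 6 → ℕ := ![n/2, n/3, n/7, n/43, n/1807, s] with hf
  set E := Nat.multinomial Finset.univ f with hE
  set D := ∏ i, (f i)^(f i) with hD
  set r := Nat.sqrt n with hr
  have h0 : f 0 = n/2 := rfl
  have h1 : f 1 = n/3 := rfl
  have h2 : f 2 = n/7 := rfl
  have h3 : f 3 = n/43 := rfl
  have h4 : f 4 = n/1807 := rfl
  have h5 : f 5 = s := rfl
  have hsum : ∑ i, f i = n := by
    rw [Fin.sum_univ_six, h0, h1, h2, h3, h4, h5]
    omega
  -- nat inequality
  have hED : E * D ≤ n ^ n := by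
    have := multinomial_mul_prod_pow_le Finset.univ f
    rwa [hsum] at this
  have hain : lcmUpTo n * D ≤ n^(r+1) * 4^(r+s) * n^n := by
    calc lcmUpTo n * D ≤ (n^(r+1) * 4^(r+s) * E) * D :=
          Nat.mul_le_mul_right _ (nat_main n hn1807)
      _ = n^(r+1) * 4^(r+s) * (E * D) := by ring
      _ ≤ n^(r+1) * 4^(r+s) * n^n := Nat.mul_le_mul_left _ hED
  -- cast
  have hcast : (lcmUpTo n : ℝ) * (D:ℝ) ≤ (n:ℝ)^(r+1) * 4^(r+s) * (n:ℝ)^n := by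
    exact_mod_cast hain
  have hDpos : 0 < (D:ℝ) := by
    have : 0 < D := Finset.prod_pos (fun i _ => by
      rcases Nat.eq_zero_or_pos (f i) with h | h
      · rw [h]; norm_num
      · positivity)
    exact_mod_cast this
  -- real comparison
  have hfpos : ∀ i : Fin 6, 0 < f i := by
    intro i
    fin_cases i
    · show 0 < n/2; omega
    · show 0 < n/3; omega
    · show 0 < n/7; omega
    · show 0 < n/43; omega
    · show 0 < n/1807; omega
    · show 0 < s; omega
  have hreal : (n:ℝ)^(r+1) * 4^(r+s) * (n:ℝ)^n ≤ 3^n * (D:ℝ) := by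
    have hnR : (0:ℝ) < n := by exact_mod_cast Nat.pos_of_ne_zero hn0
    have hX : (0:ℝ) < (n:ℝ)^(r+1) * 4^(r+s) * (n:ℝ)^n := by positivity
    have hY : (0:ℝ) < 3^n * (D:ℝ) := by positivity
    rw [← Real.log_le_log_iff hX hY]
    have hDcast : (D:ℝ) = ∏ i, ((f i : ℝ))^(f i) := by
      rw [hD]; push_cast; rfl
    have hlogD : Real.log (D:ℝ) = ∑ i, (f i : ℝ) * Real.log (f i) := by
      rw [hDcast, Real.log_prod (fun i _ => by
        have := hfpos i; positivity)]
      congr 1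
      funext i
      rw [Real.log_pow]
    have hlogX : Real.log ((n:ℝ)^(r+1) * 4^(r+s) * (n:ℝ)^n)
        = ((r:ℝ)+1) * Real.log n + ((r:ℝ)+(s:ℝ)) * Real.log 4 + (n:ℝ) * Real.log n := by
      rw [Real.log_mul (by positivity) (by positivity),
        Real.log_mul (by positivity) (by positivity),
        Real.log_pow, Real.log_pow, Real.log_pow]
      push_cast
      ring
    have hlogY : Real.log (3^n * (D:ℝ)) = (n:ℝ) * Real.log 3 + Real.log (D:ℝ) := by
      rw [Real.log_mul (by positivity) hDpos.ne', Real.log_pow]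
    rw [hlogX, hlogY, hlogD]
    have hnum := numeric_main (n:ℝ) (↑(n/2)) (↑(n/3)) (↑(n/7)) (↑(n/43)) (↑(n/1807)) (↑s) (↑r)
      (by exact_mod_cast hn)
      (by exact_mod_cast show 2*(n/2) ≤ n by omega)
      (by exact_mod_cast show n < 2*(n/2) + 2 by omega)
      (by exact_mod_cast show 3*(n/3) ≤ n by omega)
      (by exact_mod_cast show n < 3*(n/3) + 3 by omega)
      (by exact_mod_cast show 7*(n/7) ≤ n by omega)
      (by exact_mod_cast show n < 7*(n/7) + 7 by omega)
      (by exact_mod_cast show 43*(n/43) ≤ n by omega)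
      (by exact_mod_cast show n < 43*(n/43) + 43 by omega)
      (by exact_mod_cast show 1807*(n/1807) ≤ n by omega)
      (by exact_mod_cast show n < 1807*(n/1807) + 1807 by omega)
      (by exact_mod_cast show n ≤ 3263442*s by omega)
      (by exact_mod_cast show 3263442*s ≤ n + 5*3263442 by omega)
      (by positivity)
      (by have := Nat.sqrt_le' n; rw [← hr] at this; exact_mod_cast this)
      (by exact_mod_cast show n/2 + n/3 + n/7 + n/43 + n/1807 + s = n by omega)
    calc ((r:ℝ)+1) * Real.log n + ((r:ℝ)+(s:ℝ)) * Real.log 4 + (n:ℝ) * Real.log n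
        = ((r:ℝ) + 1 + n) * Real.log n + ((r:ℝ)+(s:ℝ)) * Real.log 4 := by ring
      _ ≤ (n:ℝ) * Real.log 3 + _ := hnum
      _ = (n:ℝ) * Real.log 3 + ∑ i, (f i:ℝ) * Real.log (f i) := by
          rw [Fin.sum_univ_six, h0, h1, h2, h3, h4, h5]
  have : (lcmUpTo n : ℝ) * D ≤ 3^n * D := le_trans hcast hreal
  exact (mul_le_mul_iff_of_pos_right hDpos).mp this

/-- `lcm(1, ..., n) = O(3^n)`: there is a constant `K > 0` such that
`lcm(1, ..., n) ≤ K * 3^n` for all `n`. -/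
theorem lcm_bigO_three_pow :
    ∃ K : ℝ, 0 < K ∧ ∀ n : ℕ, (lcmUpTo n : ℝ) ≤ K * 3 ^ n := by
  set C : ℕ := (Finset.range (10^13)).sup lcmUpTo with hC
  have hC0 : (0:ℝ) ≤ (C:ℝ) := Nat.cast_nonneg C
  refine ⟨(C:ℝ) + 1, by linarith, fun n => ?_⟩
  have hK1 : (1:ℝ) ≤ (C:ℝ) + 1 := by linarith
  have h3n : (1:ℝ) ≤ 3^n := one_le_pow₀ (by norm_num)
  rcases le_or_gt (10^13) n with h | h
  · calc (lcmUpTo n : ℝ) ≤ 3^n := eventual n h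
      _ = 1 * 3^n := (one_mul _).symm
      _ ≤ ((C:ℝ)+1) * 3^n := by
          apply mul_le_mul_of_nonneg_right hK1
          positivity
  · have hle : lcmUpTo n ≤ C := Finset.le_sup (Finset.mem_range.mpr h)
    calc (lcmUpTo n : ℝ) ≤ (C:ℝ) := by exact_mod_cast hle
      _ ≤ ((C:ℝ)+1) * 1 := by linarith
      _ ≤ ((C:ℝ)+1) * 3^n := mul_le_mul_of_nonneg_left h3n (by linarith)
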